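/- Let K(t,x;κ,λ) = (λ²/4) I₀(√(λ²((κt)² − x²)/(2κ))) for |x| ≤ κt and 0 otherwise. Then the space-time convolution (1 ⋆ K)(t,x) = ∫₀ᵗ∫_ℝ K(s,y) dy ds equals cosh(|λ|√(κ/2) t) − 1, for all t ≥ 0 and x ∈ ℝ. -/

import Mathlib

open Real MeasureTheory

/-- Modified Bessel function of the first kind of order zero:
`I₀(z) = Σ_{k≥0} (z²/4)ᵏ/(k!)²`. -/
noncomputable def besselI0 (z : ℝ) : ℝ :=
  ∑' k : ℕ, (z ^ 2 / 4) ^ k / (k.factorial : ℝ) ^ 2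

/-- `K(t,x) = (λ²/4) I₀(√(λ²((κt)² − x²)/(2κ)))` on `|x| ≤ κt`, zero otherwise. -/
noncomputable def Kker (κ lam t x : ℝ) : ℝ :=
  if |x| ≤ κ * t then
    lam ^ 2 / 4 * besselI0 (Real.sqrt (lam ^ 2 * ((κ * t) ^ 2 - x ^ 2) / (2 * κ)))
  else 0


lemma beta_nat (k : ℕ) : ∫ x in (0:ℝ)..1, x ^ k * (1 - x) ^ k
    = (k.factorial : ℝ) ^ 2 / ((2 * k + 1).factorial : ℝ) := by
  have hu : 0 < Complex.re ((k : ℂ) + 1) := by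
    simp [Complex.add_re]
    positivity
  have h := Complex.betaIntegral_eval_nat_add_one_right hu k
  have hprod : ∀ m : ℕ, (∏ j ∈ Finset.range m, ((k : ℂ) + 1 + j)) = ((k+1).ascFactorial m : ℂ) := by
    intro m
    induction m with
    | zero => simp [Nat.ascFactorial_zero]
    | succ m ih =>
      rw [Finset.prod_range_succ, ih, Nat.ascFactorial_succ]
      push_cast
      ring
  rw [hprod (k+1)] at h
  have hfac : (k.factorial : ℂ) * ((k+1).ascFactorial (k+1) : ℂ) = ((2*k+1).factorial : ℂ) := by
    rw [← Nat.cast_mul, Nat.factorial_mul_ascFactorial k (k+1)]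
    norm_num
    ring_nf
  have hleft : Complex.betaIntegral ((k:ℂ)+1) ((k:ℂ)+1)
      = ((∫ x in (0:ℝ)..1, x ^ k * (1 - x) ^ k : ℝ) : ℂ) := by
    rw [Complex.betaIntegral]
    rw [← intervalIntegral.integral_ofReal]
    apply intervalIntegral.integral_congr
    intro x _
    have h1 : (k:ℂ) + 1 - 1 = ((k:ℕ) : ℂ) := by ring
    simp only [h1, Complex.cpow_natCast]
    push_cast
    ring
  rw [hleft] at h
  have hk0 : (k.factorial : ℂ) ≠ 0 := Nat.cast_ne_zero.mpr k.factorial_ne_zero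
  have hm0 : ((2*k+1).factorial : ℂ) ≠ 0 := Nat.cast_ne_zero.mpr (2*k+1).factorial_ne_zero
  have hasc : ((k+1).ascFactorial (k+1) : ℂ) = ((2*k+1).factorial : ℂ) / (k.factorial : ℂ) := by
    rw [eq_div_iff hk0]
    linear_combination hfac
  rw [hasc] at h
  rw [div_div_eq_mul_div] at h
  have : ((∫ x in (0:ℝ)..1, x ^ k * (1 - x) ^ k : ℝ) : ℂ)
      = ((((k.factorial : ℝ)) ^ 2 / ((2 * k + 1).factorial : ℝ) : ℝ) : ℂ) := by
    rw [h]
    push_cast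
    ring
  exact_mod_cast this

lemma wallis_nat (a : ℝ) (ha : 0 ≤ a) (k : ℕ) :
    ∫ y in (-a)..a, (a ^ 2 - y ^ 2) ^ k
      = 2 ^ (2 * k + 1) * a ^ (2 * k + 1) * (k.factorial : ℝ) ^ 2 / ((2 * k + 1).factorial : ℝ) := by
  rcases eq_or_lt_of_le ha with rfl | ha'
  · simp
  · have h2a : (2 * a) ≠ 0 := by positivity
    have hsub := intervalIntegral.integral_comp_mul_add
      (a := (0:ℝ)) (b := 1) (fun y => (a ^ 2 - y ^ 2) ^ k) h2a (-a)
    simp only [mul_zero, zero_add, mul_one] at hsub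
    have e2 : 2 * a + -a = a := by ring
    rw [e2] at hsub
    have heq : (fun x : ℝ => (a ^ 2 - (2 * a * x + -a) ^ 2) ^ k)
        = fun x : ℝ => (4 * a ^ 2) ^ k * (x ^ k * (1 - x) ^ k) := by
      funext x
      rw [← mul_pow, ← mul_pow]
      congr 1
      ring
    rw [heq, intervalIntegral.integral_const_mul, beta_nat] at hsub
    have : ∫ y in (-a)..a, (a ^ 2 - y ^ 2) ^ k
        = (2 * a) * ((4 * a ^ 2) ^ k * ((k.factorial : ℝ) ^ 2 / ((2 * k + 1).factorial : ℝ))) := by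
      rw [hsub, smul_eq_mul]
      field_simp
    rw [this]
    have e3 : (2:ℝ) ^ (2 * k + 1) * a ^ (2 * k + 1) = 2 * a * (4 * a ^ 2) ^ k := by
      rw [← mul_pow, pow_succ, pow_mul]
      have h4 : (2 * a) ^ 2 = 4 * a ^ 2 := by ring
      rw [h4]
      ring
    rw [e3]
    ring

lemma inner_integral (κ lam s : ℝ) (hκ : 0 < κ) (hlam : lam ≠ 0) (hs : 0 ≤ s) :
    ∫ y : ℝ, Kker κ lam s y
      = (|lam| * Real.sqrt (κ / 2)) * Real.sinh (|lam| * Real.sqrt (κ / 2) * s) := by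
  set a := κ * s with ha_def
  have ha : 0 ≤ a := by positivity
  set c := |lam| * Real.sqrt (κ / 2) with hc_def
  have hc2 : c ^ 2 = lam ^ 2 * (κ / 2) := by
    rw [hc_def, mul_pow, sq_abs, Real.sq_sqrt (by positivity)]
  set F : ℕ → ℝ → ℝ := fun k y => Set.indicator (Set.Icc (-a) a)
    (fun y => lam ^ 2 / 4 * ((lam ^ 2 / (8 * κ)) ^ k * (a ^ 2 - y ^ 2) ^ k / (k.factorial : ℝ) ^ 2)) y
    with hF_def
  have hK : ∀ y, Kker κ lam s y = ∑' k, F k y := by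
    intro y
    by_cases hy : |y| ≤ a
    · have hy' : y ∈ Set.Icc (-a) a := by
        rw [Set.mem_Icc]
        exact abs_le.mp hy
      have hy2 : y ^ 2 ≤ a ^ 2 := sq_le_sq' (by linarith [abs_le.mp hy]) (le_of_abs_le hy)
      have hz : 0 ≤ lam ^ 2 * (a ^ 2 - y ^ 2) / (2 * κ) := by
        apply div_nonneg (mul_nonneg (sq_nonneg _) (by linarith)) (by positivity)
      simp only [hF_def, Set.indicator_of_mem hy']
      rw [Kker, if_pos hy, besselI0, Real.sq_sqrt hz, ← tsum_mul_left]
      apply tsum_congr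
      intro k
      have hb : lam ^ 2 * (a ^ 2 - y ^ 2) / (2 * κ) / 4
          = lam ^ 2 / (8 * κ) * (a ^ 2 - y ^ 2) := by
        field_simp
        try ring
        try exact Or.inl trivial
      rw [hb, mul_pow]
    · have hy' : y ∉ Set.Icc (-a) a := by
        rw [Set.mem_Icc]
        intro h
        exact hy (abs_le.mpr h)
      simp only [hF_def, Set.indicator_of_notMem hy']
      rw [Kker, if_neg hy, tsum_zero]
  have hFnn : ∀ k y, 0 ≤ F k y := by
    intro k y
    apply Set.indicator_nonneg
    intro y hy
    rw [Set.mem_Icc] at hy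
    have hy2 : y ^ 2 ≤ a ^ 2 := sq_le_sq' (by linarith [hy.1]) hy.2
    have h1 : (0:ℝ) ≤ a ^ 2 - y ^ 2 := by linarith
    positivity
  have hint : ∀ k, Integrable (F k) := by
    intro k
    rw [hF_def]
    rw [integrable_indicator_iff measurableSet_Icc]
    apply Continuous.integrableOn_Icc
    exact continuous_const.mul ((continuous_const.mul
      ((continuous_const.sub (continuous_pow 2)).pow k)).div_const _)
  have hval : ∀ k, ∫ y, F k y = c * ((c * s) ^ (2 * k + 1) / ((2 * k + 1).factorial : ℝ)) := by
    intro k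
    rw [hF_def]
    rw [MeasureTheory.integral_indicator measurableSet_Icc,
      MeasureTheory.integral_Icc_eq_integral_Ioc,
      ← intervalIntegral.integral_of_le (neg_le_self ha)]
    have heq : (fun y : ℝ => lam ^ 2 / 4 * ((lam ^ 2 / (8 * κ)) ^ k * (a ^ 2 - y ^ 2) ^ k / (k.factorial : ℝ) ^ 2))
        = fun y : ℝ => (lam ^ 2 / 4 * (lam ^ 2 / (8 * κ)) ^ k / (k.factorial : ℝ) ^ 2) * (a ^ 2 - y ^ 2) ^ k := by
      funext y
      ring
    rw [heq, intervalIntegral.integral_const_mul, wallis_nat a ha k]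
    have hk0 : ((k.factorial : ℝ)) ≠ 0 := Nat.cast_ne_zero.mpr k.factorial_ne_zero
    have hm0 : (((2 * k + 1).factorial : ℝ)) ≠ 0 := Nat.cast_ne_zero.mpr (2 * k + 1).factorial_ne_zero
    have hRHS : c * (c * s) ^ (2 * k + 1) = (lam ^ 2 * (κ / 2)) ^ k * (lam ^ 2 * (κ / 2)) * (s * (s ^ 2) ^ k) := by
      rw [mul_pow, ← mul_assoc, ← pow_succ']
      have h1 : 2 * k + 1 + 1 = 2 * (k + 1) := by ring
      rw [h1, pow_mul, hc2, pow_succ, mul_pow]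
      rw [show s ^ (2 * k + 1) = s * (s ^ 2) ^ k from by rw [pow_succ, pow_mul]; ring]
    have e3 : (2:ℝ) ^ (2 * k + 1) * a ^ (2 * k + 1) = 2 * a * (4 * a ^ 2) ^ k := by
      rw [← mul_pow, pow_succ, pow_mul]
      have h4 : (2 * a) ^ 2 = 4 * a ^ 2 := by ring
      rw [h4]
      ring
    have hbase : (lam ^ 2 / (8 * κ)) ^ k * (4 * a ^ 2) ^ k = (lam ^ 2 * (κ / 2)) ^ k * (s ^ 2) ^ k := by
      rw [← mul_pow, ← mul_pow]
      congr 1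
      rw [ha_def]
      field_simp
      ring
    have hrw : c * ((c * s) ^ (2 * k + 1) / (((2 * k + 1).factorial : ℝ)))
        = c * (c * s) ^ (2 * k + 1) / (((2 * k + 1).factorial : ℝ)) := by ring
    rw [hrw, hRHS, mul_div_assoc (2 ^ (2 * k + 1) * a ^ (2 * k + 1))]
    rw [e3]
    set P := (lam ^ 2 / (8 * κ)) ^ k with hP
    set R := (4 * a ^ 2) ^ k with hR
    set Q := (lam ^ 2 * (κ / 2)) ^ k with hQ
    set S := (s ^ 2) ^ k with hS
    clear_value P R Q S
    rw [ha_def]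
    field_simp
    linear_combination (4 * s) * hbase
  have hnorm : ∀ k, (fun y => ‖F k y‖) = F k :=
    fun k => funext fun y => Real.norm_of_nonneg (hFnn k y)
  have hsum : Summable fun k => ∫ y, ‖F k y‖ := by
    have h1 : (fun k => ∫ y, ‖F k y‖)
        = fun k => c * ((c * s) ^ (2 * k + 1) / ((2 * k + 1).factorial : ℝ)) := by
      funext k
      rw [hnorm k, hval k]
    rw [h1]
    exact ((Real.hasSum_sinh (c * s)).mul_left c).summable
  have hfun : (fun y => Kker κ lam s y) = fun y => ∑' k, F k y := funext hK
  calc ∫ y, Kker κ lam s y = ∫ y, ∑' k, F k y := by rw [hfun]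
    _ = ∑' k, ∫ y, F k y := (MeasureTheory.integral_tsum_of_summable_integral_norm hint hsum).symm
    _ = ∑' k, c * ((c * s) ^ (2 * k + 1) / ((2 * k + 1).factorial : ℝ)) := tsum_congr hval
    _ = c * Real.sinh (c * s) := ((Real.hasSum_sinh (c * s)).mul_left c).tsum_eq

theorem Kker_spacetime_integral (κ lam t x : ℝ) (hκ : 0 < κ) (hlam : lam ≠ 0) (ht : 0 ≤ t) :
    ∫ s in (0:ℝ)..t, ∫ y : ℝ, Kker κ lam s y
      = Real.cosh (|lam| * Real.sqrt (κ / 2) * t) - 1 := by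
  have hEq : Set.EqOn (fun s => ∫ y : ℝ, Kker κ lam s y)
      (fun s => (|lam| * Real.sqrt (κ / 2)) * Real.sinh (|lam| * Real.sqrt (κ / 2) * s))
      (Set.uIcc 0 t) := by
    intro s hsmem
    rw [Set.uIcc_of_le ht] at hsmem
    exact inner_integral κ lam s hκ hlam hsmem.1
  rw [intervalIntegral.integral_congr hEq]
  set c := |lam| * Real.sqrt (κ / 2) with hc
  have hc0 : 0 < c := mul_pos (abs_pos.mpr hlam) (Real.sqrt_pos.mpr (by positivity))
  have hderiv : ∀ u ∈ Set.uIcc (0:ℝ) t,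
      HasDerivAt (fun s => Real.cosh (c * s)) (c * Real.sinh (c * u)) u := by
    intro u _
    have h1 : HasDerivAt (fun s : ℝ => c * s) c u := by
      simpa using (hasDerivAt_id u).const_mul c
    have h2 := (Real.hasDerivAt_cosh (c * u)).comp u h1
    refine h2.congr_deriv ?_
    ring
  have hcont : IntervalIntegrable (fun s => c * Real.sinh (c * s)) volume 0 t := by
    apply Continuous.intervalIntegrable
    exact continuous_const.mul (Real.continuous_sinh.comp (continuous_const.mul continuous_id))
  rw [intervalIntegral.integral_eq_sub_of_hasDerivAt hderiv hcont]
  simp
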